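/- Let γ > 0 and let Γ be a CPM(γ)-optimal clustering of a graph G = (V,E). If E' ⊇ E is obtained by adding a single edge whose endpoints lie in the same cluster of Γ, then Γ is CPM(γ)-optimal for (V,E'). Consequently (by induction and combination with inter-edge consistency), CPM(γ) satisfies Standard Consistency: adding edges within clusters of Γ and removing edges between clusters of Γ preserves optimality of Γ. -/

import Mathlib

open Finset
open scoped Classical

/-- Edges of `E` lying inside the vertex set `c`. -/
noncomputable def inEdges {V : Type*} [DecidableEq V]
    (E : Finset (Sym2 V)) (c : Finset V) : Finset (Sym2 V) :=
  E.filter (fun e => ∀ v ∈ e, v ∈ c)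

/-- The CPM(γ) score of a clustering `P` of the graph with edge set `E`. -/
noncomputable def cpm {V : Type*} [Fintype V] [DecidableEq V] (γ : ℝ)
    (E : Finset (Sym2 V)) (P : Finpartition (univ : Finset V)) : ℝ :=
  ∑ c ∈ P.parts, (((inEdges E c).card : ℝ) - γ * (c.card.choose 2))

noncomputable def intraCount {V : Type*} [Fintype V] [DecidableEq V]
    (E : Finset (Sym2 V)) (P : Finpartition (univ : Finset V)) : ℕ :=
  (E.filter (fun e => ∃ c ∈ P.parts, ∀ v ∈ e, v ∈ c)).card

lemma sum_inEdges_eq {V : Type*} [Fintype V] [DecidableEq V]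
    (E : Finset (Sym2 V)) (P : Finpartition (univ : Finset V)) :
    ∑ c ∈ P.parts, (inEdges E c).card = intraCount E P := by
  have hbu : E.filter (fun e => ∃ c ∈ P.parts, ∀ v ∈ e, v ∈ c)
      = P.parts.biUnion (fun c => inEdges E c) := by
    ext e
    simp only [inEdges, mem_biUnion, mem_filter]
    tauto
  rw [intraCount, hbu, card_biUnion]
  intro c hc c' hc' hne
  rw [Function.onFun, Finset.disjoint_left]
  intro e he he'
  simp only [inEdges, mem_filter] at he he'
  have hex : ∃ u, u ∈ e := by
    induction e using Sym2.ind with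
    | _ a b => exact ⟨a, Sym2.mem_mk_left a b⟩
  obtain ⟨u, hu⟩ := hex
  exact (Finset.disjoint_left.mp (P.disjoint hc hc' hne) (he.2 u hu)) (he'.2 u hu)

lemma cpm_eq {V : Type*} [Fintype V] [DecidableEq V] (γ : ℝ)
    (E : Finset (Sym2 V)) (P : Finpartition (univ : Finset V)) :
    cpm γ E P = (intraCount E P : ℝ) - γ * ∑ c ∈ P.parts, ((c.card.choose 2 : ℝ)) := by
  rw [cpm, Finset.sum_sub_distrib, ← Finset.mul_sum, ← sum_inEdges_eq]
  push_cast
  ring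

lemma intra_split {V : Type*} [Fintype V] [DecidableEq V]
    (A B : Finset (Sym2 V)) (Q : Finpartition (univ : Finset V)) :
    intraCount A Q = intraCount (A ∩ B) Q + intraCount (A \ B) Q := by
  unfold intraCount
  have hAB : A ∩ B ∪ A \ B = A := by ext x; by_cases hx : x ∈ B <;> simp [hx]
  rw [← card_union_of_disjoint, ← filter_union, hAB]
  exact disjoint_filter_filter (Finset.disjoint_of_subset_left Finset.inter_subset_right Finset.sdiff_disjoint.symm)

lemma key_ineq {V : Type*} [Fintype V] [DecidableEq V]
    (E E' : Finset (Sym2 V)) (Γ P : Finpartition (univ : Finset V))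
    (hadd : ∀ e ∈ E' \ E, ∃ c ∈ Γ.parts, ∀ v ∈ e, v ∈ c)
    (hrem : ∀ e ∈ E \ E', ∀ c ∈ Γ.parts, ¬ (∀ v ∈ e, v ∈ c)) :
    intraCount E' P + intraCount E Γ ≤ intraCount E P + intraCount E' Γ := by
  have h1 := intra_split E E' P
  have h2 := intra_split E E' Γ
  have h3 := intra_split E' E P
  have h4 := intra_split E' E Γ
  rw [Finset.inter_comm E' E] at h3 h4
  have hremΓ : intraCount (E \ E') Γ = 0 := by
    unfold intraCount
    rw [Finset.card_eq_zero, Finset.filter_eq_empty_iff]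
    intro e he
    rintro ⟨c, hc, hall⟩
    exact hrem e he c hc hall
  have haddΓ : intraCount (E' \ E) Γ = (E' \ E).card := by
    unfold intraCount
    rw [Finset.filter_true_of_mem hadd]
  have haddP : intraCount (E' \ E) P ≤ (E' \ E).card := Finset.card_filter_le _ _
  omega

theorem stmt_3 {V : Type*} [Fintype V] [DecidableEq V] (γ : ℝ) (hγ : 0 < γ) :
    (∀ (E : Finset (Sym2 V)) (Γ : Finpartition (univ : Finset V)),
      (∀ P : Finpartition (univ : Finset V), cpm γ E P ≤ cpm γ E Γ) →
      ∀ e : Sym2 V, e ∉ E → (∃ c ∈ Γ.parts, ∀ v ∈ e, v ∈ c) →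
        ∀ P : Finpartition (univ : Finset V),
          cpm γ (insert e E) P ≤ cpm γ (insert e E) Γ) ∧
    (∀ (E E' : Finset (Sym2 V)) (Γ : Finpartition (univ : Finset V)),
      (∀ P : Finpartition (univ : Finset V), cpm γ E P ≤ cpm γ E Γ) →
      (∀ e ∈ E' \ E, ∃ c ∈ Γ.parts, ∀ v ∈ e, v ∈ c) →
      (∀ e ∈ E \ E', ∀ c ∈ Γ.parts, ¬ (∀ v ∈ e, v ∈ c)) →
        ∀ P : Finpartition (univ : Finset V), cpm γ E' P ≤ cpm γ E' Γ) := by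
  have main : ∀ (E E' : Finset (Sym2 V)) (Γ : Finpartition (univ : Finset V)),
      (∀ P : Finpartition (univ : Finset V), cpm γ E P ≤ cpm γ E Γ) →
      (∀ e ∈ E' \ E, ∃ c ∈ Γ.parts, ∀ v ∈ e, v ∈ c) →
      (∀ e ∈ E \ E', ∀ c ∈ Γ.parts, ¬ (∀ v ∈ e, v ∈ c)) →
        ∀ P : Finpartition (univ : Finset V), cpm γ E' P ≤ cpm γ E' Γ := by
    intro E E' Γ hopt hadd hrem P
    have hkey := key_ineq E E' Γ P hadd hrem
    have hopt' := hopt P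
    rw [cpm_eq, cpm_eq] at hopt' ⊢
    have : (intraCount E' P : ℝ) + intraCount E Γ ≤ intraCount E P + intraCount E' Γ := by
      exact_mod_cast hkey
    linarith
  refine ⟨?_, main⟩
  intro E Γ hopt e he hin P
  refine main E (insert e E) Γ hopt ?_ ?_ P
  · intro f hf
    rw [Finset.mem_sdiff, Finset.mem_insert] at hf
    rcases hf.1 with rfl | h
    · exact hin
    · exact absurd h hf.2
  · intro f hf
    rw [Finset.mem_sdiff] at hf
    exact absurd (Finset.mem_insert_of_mem hf.1) hf.2
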